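/- Let C ⊂ ℝᵈ \ {0} be an open convex cone whose closure contains no 1-dimensional linear subspace, equipped with the Hilbert pseudo-metric d_C. If A is a linear map with A(C) ⊂ C and A(C) has diameter D < ∞ in d_C, then for all x, y ∈ C, d_C(Ax, Ay) ≤ δ·d_C(x,y) where δ = (√(e^D) − 1)/(√(e^D) + 1). -/

import Mathlib

/-- The Birkhoff gauge `M(x/y) = inf {t > 0 | t•y − x ∈ closure C}` of a cone `C`. -/
noncomputable def coneGauge {d : ℕ} (C : Set (Fin d → ℝ)) (x y : Fin d → ℝ) : ℝ :=
  sInf {t : ℝ | 0 < t ∧ t • y - x ∈ closure C}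

/-- The Hilbert pseudo-metric on a cone `C`,
`d_C(x,y) = log (M(x/y)·M(y/x))`; on `ℝ²₊` this equals `log max_{i,j} (xᵢyⱼ)/(xⱼyᵢ)`. -/
noncomputable def hilbertDist {d : ℕ} (C : Set (Fin d → ℝ)) (x y : Fin d → ℝ) : ℝ :=
  Real.log (coneGauge C x y * coneGauge C y x)

section Geom
variable {d : ℕ} {C : Set (Fin d → ℝ)}

lemma clC_smul (hcone : ∀ x ∈ C, ∀ r : ℝ, 0 < r → r • x ∈ C)
    {v : Fin d → ℝ} {r : ℝ} (hv : v ∈ closure C) (hr : 0 < r) : r • v ∈ closure C :=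
  map_mem_closure (continuous_const_smul r) hv (fun w hw => hcone w hw r hr)

lemma clC_add (hconv : Convex ℝ C)
    (hcone : ∀ x ∈ C, ∀ r : ℝ, 0 < r → r • x ∈ C)
    {v w : Fin d → ℝ} (hv : v ∈ closure C) (hw : w ∈ closure C) : v + w ∈ closure C := by
  have h : (1/2 : ℝ) • v + (1/2 : ℝ) • w ∈ closure C :=
    hconv.closure hv hw (by norm_num) (by norm_num) (by norm_num)
  have h2 := clC_smul hcone h (by norm_num : (0:ℝ) < 2)
  have e : (2:ℝ) • ((1/2 : ℝ) • v + (1/2 : ℝ) • w) = v + w := by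
    rw [smul_add, smul_smul, smul_smul]; norm_num
  rwa [e] at h2

lemma clC_add_mem (hopen : IsOpen C) (hconv : Convex ℝ C)
    (hcone : ∀ x ∈ C, ∀ r : ℝ, 0 < r → r • x ∈ C)
    {c u : Fin d → ℝ} (hc : c ∈ closure C) (hu : u ∈ C) : u + c ∈ C := by
  have h : (1/2 : ℝ) • u + (1/2 : ℝ) • c ∈ interior C :=
    hconv.combo_interior_closure_mem_interior (by rwa [hopen.interior_eq]) hc
      (by norm_num) (by norm_num) (by norm_num)
  rw [hopen.interior_eq] at h
  have h2 := hcone _ h 2 (by norm_num)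
  have e : (2:ℝ) • ((1/2 : ℝ) • u + (1/2 : ℝ) • c) = u + c := by
    rw [smul_add, smul_smul, smul_smul]; norm_num
  rwa [e] at h2

lemma no_line (h0 : (0 : Fin d → ℝ) ∉ C)
    (hcone : ∀ x ∈ C, ∀ r : ℝ, 0 < r → r • x ∈ C)
    (hline : ∀ x : Fin d → ℝ, x ≠ 0 →
      ¬((Submodule.span ℝ {x} : Set (Fin d → ℝ)) ⊆ closure C))
    {x : Fin d → ℝ} (hx : x ∈ closure C) (hnx : -x ∈ closure C) (hx0 : x ≠ 0) : False := by
  apply hline x hx0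
  intro z hz
  rw [SetLike.mem_coe, Submodule.mem_span_singleton] at hz
  obtain ⟨a, rfl⟩ := hz
  rcases lt_trichotomy a 0 with h | h | h
  · have : (-a) • (-x) ∈ closure C := clC_smul hcone hnx (by linarith)
    simpa using this
  · subst h
    simp only [zero_smul]
    have hmem : ∀ n : ℕ, (1/(n+1) : ℝ) • x ∈ closure C := fun n =>
      clC_smul hcone hx (by positivity)
    have ht : Filter.Tendsto (fun n : ℕ => (1/(n+1) : ℝ) • x) Filter.atTop (nhds 0) := by
      have := (tendsto_one_div_add_atTop_nhds_zero_nat : Filter.Tendsto (fun n : ℕ => 1 / ((n : ℝ) + 1)) Filter.atTop (nhds 0)).smul_const x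
      simpa using this
    exact isClosed_closure.mem_of_tendsto ht (Filter.Eventually.of_forall hmem)
  · exact clC_smul hcone hx h

lemma gauge_bddBelow (x y : Fin d → ℝ) :
    BddBelow {t : ℝ | 0 < t ∧ t • y - x ∈ closure C} :=
  ⟨0, fun t ht => le_of_lt ht.1⟩

lemma gauge_le {x y : Fin d → ℝ} {t : ℝ} (ht : 0 < t) (hm : t • y - x ∈ closure C) :
    coneGauge C x y ≤ t :=
  csInf_le (gauge_bddBelow x y) ⟨ht, hm⟩

lemma gauge_nonempty (hopen : IsOpen C) (hcone : ∀ x ∈ C, ∀ r : ℝ, 0 < r → r • x ∈ C)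
    {x y : Fin d → ℝ} (hy : y ∈ C) :
    {t : ℝ | 0 < t ∧ t • y - x ∈ closure C}.Nonempty := by
  obtain ⟨ε, hε, hball⟩ := Metric.isOpen_iff.1 hopen y hy
  set t : ℝ := ‖x‖ / ε + 1 with htdef
  have ht : 0 < t := by positivity
  refine ⟨t, ht, subset_closure ?_⟩
  have hmem : y - t⁻¹ • x ∈ C := by
    apply hball
    rw [Metric.mem_ball, dist_eq_norm]
    have e : y - t⁻¹ • x - y = -(t⁻¹ • x) := by abel
    rw [e, norm_neg, norm_smul, Real.norm_eq_abs, abs_of_pos (by positivity)]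
    rw [inv_mul_lt_iff₀ ht]
    have : t * ε = ‖x‖ + ε := by rw [htdef]; field_simp
    linarith
  have h2 := hcone _ hmem t ht
  have e : t • (y - t⁻¹ • x) = t • y - x := by
    rw [smul_sub, smul_smul, mul_inv_cancel₀ (ne_of_gt ht), one_smul]
  rwa [e] at h2

lemma gauge_spec (hopen : IsOpen C) (h0 : (0 : Fin d → ℝ) ∉ C)
    (hcone : ∀ x ∈ C, ∀ r : ℝ, 0 < r → r • x ∈ C)
    (hline : ∀ x : Fin d → ℝ, x ≠ 0 →
      ¬((Submodule.span ℝ {x} : Set (Fin d → ℝ)) ⊆ closure C))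
    {x y : Fin d → ℝ} (hx : x ∈ C) (hy : y ∈ C) :
    0 < coneGauge C x y ∧ coneGauge C x y • y - x ∈ closure C := by
  have hne := gauge_nonempty hopen hcone (x := x) hy
  have hbdd := gauge_bddBelow (C := C) x y
  have hclosmem : coneGauge C x y • y - x ∈ closure C := by
    have hmemcl : coneGauge C x y ∈ closure {t : ℝ | 0 < t ∧ t • y - x ∈ closure C} :=
      csInf_mem_closure hne hbdd
    have hsub : closure {t : ℝ | 0 < t ∧ t • y - x ∈ closure C} ⊆
        {t : ℝ | t • y - x ∈ closure C} := by
      apply closure_minimal (fun t ht => ht.2)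
      exact IsClosed.preimage (by continuity) isClosed_closure
    exact hsub hmemcl
  have hge : 0 ≤ coneGauge C x y := le_csInf hne (fun t ht => le_of_lt ht.1)
  rcases eq_or_lt_of_le hge with heq | hlt
  · exfalso
    rw [← heq, zero_smul, zero_sub] at hclosmem
    exact no_line h0 hcone hline (subset_closure hx) hclosmem (fun h => h0 (h ▸ hx))
  · exact ⟨hlt, hclosmem⟩

end Geom

lemma key_log {k : ℝ} (hk : 1 ≤ k) {s : ℝ} (hs : 1 ≤ s) :
    Real.log (k*s+1) - Real.log (k+s) ≤ (k-1)/(k+1) * Real.log s := by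
  have hk0 : 0 < k := lt_of_lt_of_le one_pos hk
  set δ : ℝ := (k-1)/(k+1) with hδ
  set f : ℝ → ℝ := fun t => δ * Real.log t - Real.log (k*t+1) + Real.log (k+t) with hf
  have hderiv : ∀ t : ℝ, 1 < t →
      HasDerivAt f (δ * t⁻¹ - k/(k*t+1) + 1/(k+t)) t := by
    intro t ht
    have ht0 : (0:ℝ) < t := lt_trans one_pos ht
    have h1 : HasDerivAt (fun t : ℝ => δ * Real.log t) (δ * t⁻¹) t :=
      (Real.hasDerivAt_log (ne_of_gt ht0)).const_mul δ
    have hin2 : HasDerivAt (fun t : ℝ => k*t+1) k t := by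
      simpa using ((hasDerivAt_id t).const_mul k).add_const 1
    have h2 : HasDerivAt (fun t : ℝ => Real.log (k*t+1)) (k/(k*t+1)) t :=
      hin2.log (by positivity)
    have hin3 : HasDerivAt (fun t : ℝ => k+t) 1 t := by
      simpa using (hasDerivAt_id t).const_add k
    have h3 : HasDerivAt (fun t : ℝ => Real.log (k+t)) (1/(k+t)) t :=
      hin3.log (by positivity)
    exact (h1.sub h2).add h3
  have hmono : MonotoneOn f (Set.Ici 1) := by
    have hint : interior (Set.Ici (1:ℝ)) = Set.Ioi 1 := interior_Ici
    apply monotoneOn_of_deriv_nonneg (convex_Ici 1)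
    · apply ContinuousOn.add
      apply ContinuousOn.sub
      · exact (Real.continuousOn_log.comp continuousOn_id (fun t ht => by
          simp only [Set.mem_compl_iff, Set.mem_singleton_iff, id]
          intro h; rw [h] at ht; simp at ht; linarith)).const_smul δ
      · exact Real.continuousOn_log.comp (by fun_prop) (fun t ht => by
          simp only [Set.mem_compl_iff, Set.mem_singleton_iff]
          have : (1:ℝ) ≤ t := ht
          positivity)
      · exact Real.continuousOn_log.comp (by fun_prop) (fun t ht => by
          simp only [Set.mem_compl_iff, Set.mem_singleton_iff]
          have : (1:ℝ) ≤ t := ht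
          positivity)
    · rw [hint]
      exact fun t ht => ((hderiv t ht).differentiableAt).differentiableWithinAt
    · rw [hint]
      intro t ht
      rw [(hderiv t ht).deriv]
      have ht1 : (1:ℝ) < t := ht
      have ht0 : (0:ℝ) < t := by linarith
      have heq : δ * t⁻¹ - k/(k*t+1) + 1/(k+t)
          = ((k-1)*(k*(t-1)^2)) / ((k+1)*t*((k*t+1)*(k+t))) := by
        rw [hδ]; field_simp; ring
      rw [heq]
      have : (0:ℝ) ≤ (k-1)*(k*(t-1)^2) := by
        apply mul_nonneg (by linarith) (by positivity)
      positivity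
  have h1 : f 1 ≤ f s := hmono (by simp) (by exact hs) hs
  have hf1 : f 1 = 0 := by simp [hf, mul_one]
  rw [hf1, hf] at h1
  simp only at h1
  linarith

lemma key_ineq {k a b lam mu : ℝ} (hk : 1 ≤ k) (ha : 0 < a) (hab : a ≤ b)
    (hl : 0 < lam) (hm : 0 < mu) (hlm : lam * mu ≤ k^2) :
    Real.log ((a^2 + lam*b^2) * (1+mu) / ((1+lam) * (b^2+mu*a^2))) ≤
      (k-1)/(k+1) * Real.log (b^2/a^2) := by
  have hb : 0 < b := lt_of_lt_of_le ha hab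
  have hk0 : 0 < k := lt_of_lt_of_le one_pos hk
  have hE : (0:ℝ) < (a^2 + lam*b^2) * (1+mu) / ((1+lam) * (b^2+mu*a^2)) := by positivity
  have step1 : (a^2 + lam*b^2) * (1+mu) / ((1+lam) * (b^2+mu*a^2))
      ≤ ((k*b+a)/(k*a+b))^2 := by
    have h1 : (a^2 + lam*b^2) * (1+mu) / ((1+lam) * (b^2+mu*a^2))
        ≤ (a^2 + lam*b^2) * (lam+k^2) / ((1+lam) * (lam*b^2+k^2*a^2)) := by
      rw [div_le_div_iff₀ (by positivity) (by positivity)]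
      nlinarith [mul_nonneg (mul_nonneg
        (by positivity : (0:ℝ) ≤ (a^2+lam*b^2)*(1+lam))
        (by nlinarith : (0:ℝ) ≤ k^2 - lam*mu))
        (by nlinarith : (0:ℝ) ≤ b^2 - a^2)]
    have h2 : (a^2 + lam*b^2) * (lam+k^2) / ((1+lam) * (lam*b^2+k^2*a^2))
        ≤ ((k*b+a)/(k*a+b))^2 := by
      rw [div_pow, div_le_div_iff₀ (by positivity) (by positivity)]
      nlinarith [mul_nonneg (mul_nonneg
        (by nlinarith : (0:ℝ) ≤ k^2 - 1)
        (by nlinarith : (0:ℝ) ≤ b^2 - a^2))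
        (sq_nonneg (b*lam - k*a))]
    linarith
  have step2 := Real.log_le_log hE step1
  refine le_trans step2 ?_
  have hrw : Real.log (((k*b+a)/(k*a+b))^2) = 2 * Real.log ((k*b+a)/(k*a+b)) := by
    rw [Real.log_pow]; push_cast; ring
  have hrw1 : Real.log ((k*b+a)/(k*a+b)) = Real.log (k*(b/a)+1) - Real.log (k+b/a) := by
    have e : (k*b+a)/(k*a+b) = (k*(b/a)+1)/(k+b/a) := by
      rw [div_eq_div_iff (by positivity) (by positivity)]
      field_simp
    rw [e, Real.log_div (by positivity) (by positivity)]
  have hrw2 : Real.log (b^2/a^2) = 2 * Real.log (b/a) := by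
    have e : b^2/a^2 = (b/a)^2 := (div_pow b a 2).symm
    rw [e, Real.log_pow]; push_cast; ring
  rw [hrw, hrw1, hrw2]
  have := key_log hk ((one_le_div ha).2 hab)
  calc 2 * (Real.log (k*(b/a)+1) - Real.log (k+b/a))
      ≤ 2 * ((k-1)/(k+1) * Real.log (b/a)) := by linarith
    _ = (k-1)/(k+1) * (2 * Real.log (b/a)) := by ring
section Main
variable {d : ℕ} {C : Set (Fin d → ℝ)}

lemma gauge_mul_ge_one (hopen : IsOpen C) (hconv : Convex ℝ C) (h0 : (0 : Fin d → ℝ) ∉ C)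
    (hcone : ∀ x ∈ C, ∀ r : ℝ, 0 < r → r • x ∈ C)
    (hline : ∀ x : Fin d → ℝ, x ≠ 0 →
      ¬((Submodule.span ℝ {x} : Set (Fin d → ℝ)) ⊆ closure C))
    {u v : Fin d → ℝ} (hu : u ∈ C) (hv : v ∈ C) :
    1 ≤ coneGauge C u v * coneGauge C v u := by
  obtain ⟨hlam, hlammem⟩ := gauge_spec hopen h0 hcone hline hu hv
  obtain ⟨hmu, hmumem⟩ := gauge_spec hopen h0 hcone hline hv hu
  set lam := coneGauge C u v
  set mu := coneGauge C v u
  by_contra hcon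
  push_neg at hcon
  have h1 : lam • (mu • u - v) ∈ closure C := clC_smul hcone hmumem hlam
  have h2 := clC_add hconv hcone h1 hlammem
  have e : lam • (mu • u - v) + (lam • v - u) = (lam * mu - 1) • u := by module
  rw [e] at h2
  have h3 := clC_smul hcone h2 (show 0 < (1 - lam*mu)⁻¹ by
    rw [inv_pos]; linarith)
  have e2 : (1 - lam*mu)⁻¹ • ((lam * mu - 1) • u) = -u := by
    rw [smul_smul, show (1 - lam*mu)⁻¹ * (lam*mu - 1) = -1 from by
      rw [inv_mul_eq_div, div_eq_iff (ne_of_gt (by linarith : (0:ℝ) < 1 - lam*mu))]; ring,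
      neg_one_smul]
  rw [e2] at h3
  exact no_line h0 hcone hline (subset_closure hu) h3 (fun h => h0 (h ▸ hu))

end Main


/-- Birkhoff's contraction theorem: if `C ⊆ ℝᵈ \ {0}` is an open convex cone whose
closure contains no one-dimensional linear subspace, and `A` is a linear map with
`A(C) ⊆ C` whose image has diameter `D` in the Hilbert pseudo-metric, then `A` contracts
the Hilbert pseudo-metric by the factor `δ = (√(e^D) − 1)/(√(e^D) + 1)`. -/
theorem birkhoff_contraction {d : ℕ} (C : Set (Fin d → ℝ))
    (hopen : IsOpen C) (hconv : Convex ℝ C) (h0 : (0 : Fin d → ℝ) ∉ C)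
    (hcone : ∀ x ∈ C, ∀ r : ℝ, 0 < r → r • x ∈ C)
    (hline : ∀ x : Fin d → ℝ, x ≠ 0 →
      ¬((Submodule.span ℝ {x} : Set (Fin d → ℝ)) ⊆ closure C))
    (A : (Fin d → ℝ) →ₗ[ℝ] (Fin d → ℝ)) (hA : A '' C ⊆ C)
    (D : ℝ) (hD : ∀ x ∈ C, ∀ y ∈ C, hilbertDist C (A x) (A y) ≤ D) :
    ∀ x ∈ C, ∀ y ∈ C,
      hilbertDist C (A x) (A y) ≤
        (Real.sqrt (Real.exp D) - 1) / (Real.sqrt (Real.exp D) + 1) *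
          hilbertDist C x y := by
  intro x hx y hy
  have hAx : A x ∈ C := hA ⟨x, hx, rfl⟩
  have hAy : A y ∈ C := hA ⟨y, hy, rfl⟩
  set k := Real.sqrt (Real.exp D) with hkdef
  -- 1 ≤ exp D, so 1 ≤ k
  have hexp1 : 1 ≤ Real.exp D := by
    have h1 := gauge_mul_ge_one hopen hconv h0 hcone hline hAx hAx
    have h2 := hD x hx x hx
    rw [hilbertDist] at h2
    have h3 : (0:ℝ) ≤ D := le_trans (by simpa using Real.log_le_log (by linarith) h1) h2
    calc (1:ℝ) = Real.exp 0 := Real.exp_zero.symm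
      _ ≤ Real.exp D := Real.exp_le_exp.2 h3
  have hk1 : 1 ≤ k := by
    rw [hkdef, show (1:ℝ) = Real.sqrt 1 from Real.sqrt_one.symm]
    exact Real.sqrt_le_sqrt hexp1
  have hk2 : k^2 = Real.exp D := Real.sq_sqrt (Real.exp_nonneg D)
  set β := coneGauge C x y with hβdef
  set γ := coneGauge C y x with hγdef
  obtain ⟨hβ, hβmem⟩ := gauge_spec hopen h0 hcone hline hx hy
  obtain ⟨hγ, hγmem⟩ := gauge_spec hopen h0 hcone hline hy hx
  set α := γ⁻¹ with hαdef
  have hα : 0 < α := inv_pos.2 hγ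
  have hxα : x - α • y ∈ closure C := by
    have h1 := clC_smul hcone hγmem (inv_pos.2 hγ)
    have e : γ⁻¹ • (γ • x - y) = x - γ⁻¹ • y := by
      rw [smul_sub, smul_smul, inv_mul_cancel₀ (ne_of_gt hγ), one_smul]
    rwa [e] at h1
  have hy0 : y ≠ 0 := fun h => h0 (h ▸ hy)
  have hαβ : α ≤ β := by
    by_contra hcon
    push_neg at hcon
    have hsum := clC_add hconv hcone hxα hβmem
    have e : (x - α • y) + (β • y - x) = (β - α) • y := by module
    rw [e] at hsum
    have h3 := clC_smul hcone hsum (show 0 < (α - β)⁻¹ by rw [inv_pos]; linarith)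
    have e2 : (α - β)⁻¹ • ((β - α) • y) = -y := by
      rw [smul_smul, show (α-β)⁻¹ * (β-α) = -1 from by
        rw [inv_mul_eq_div, div_eq_iff (by linarith : α - β ≠ 0)]; ring, neg_one_smul]
    rw [e2] at h3
    exact no_line h0 hcone hline (subset_closure hy) h3 hy0
  have hdxy : hilbertDist C x y = Real.log (β / α) := by
    rw [hilbertDist, hαdef, div_inv_eq_mul]
  -- key approximation inequality
  have key : ∀ ε : ℝ, 0 < ε →
      hilbertDist C (A x) (A y) ≤
        (k-1)/(k+1) * Real.log (β/α) + (k-1)/(k+1) * (2 * Real.log (1+ε)) := by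
    intro ε hε
    set a' := α / (1+ε) with ha'def
    set b' := β * (1+ε) with hb'def
    have ha' : 0 < a' := by positivity
    have ha'α : a' < α := by
      rw [ha'def, div_lt_iff₀ (by positivity)]
      nlinarith
    have hβb' : β < b' := by nlinarith
    have ha'b' : a' ≤ b' := le_trans ha'α.le (le_trans hαβ hβb'.le)
    have hu' : x - a' • y ∈ C := by
      have h1 : ((α - a') • y) + (x - α • y) ∈ C :=
        clC_add_mem hopen hconv hcone hxα (hcone y hy _ (by linarith))
      have e : ((α - a') • y) + (x - α • y) = x - a' • y := by module
      rwa [e] at h1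
    have hv' : b' • y - x ∈ C := by
      have h1 : ((b' - β) • y) + (β • y - x) ∈ C :=
        clC_add_mem hopen hconv hcone hβmem (hcone y hy _ (by linarith))
      have e : ((b' - β) • y) + (β • y - x) = b' • y - x := by module
      rwa [e] at h1
    have hAu' : A (x - a' • y) = A x - a' • A y := by simp [map_sub, map_smul]
    have hAv' : A (b' • y - x) = b' • A y - A x := by simp [map_sub, map_smul]
    have hu'C : A x - a' • A y ∈ C := hAu' ▸ hA ⟨_, hu', rfl⟩
    have hv'C : b' • A y - A x ∈ C := hAv' ▸ hA ⟨_, hv', rfl⟩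
    obtain ⟨hlam, hlammem⟩ := gauge_spec hopen h0 hcone hline hu'C hv'C
    obtain ⟨hmu, hmumem⟩ := gauge_spec hopen h0 hcone hline hv'C hu'C
    set lam := coneGauge C (A x - a' • A y) (b' • A y - A x) with hlamdef
    set mu := coneGauge C (b' • A y - A x) (A x - a' • A y) with hmudef
    have hlmexp : lam * mu ≤ Real.exp D := by
      have hd := hD _ hu' _ hv'
      rw [hilbertDist, hAu', hAv'] at hd
      have hpos : 0 < lam * mu := mul_pos hlam hmu
      calc lam * mu = Real.exp (Real.log (lam * mu)) := (Real.exp_log hpos).symm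
        _ ≤ Real.exp D := Real.exp_le_exp.2 hd
    have hM1 : coneGauge C (A x) (A y) ≤ (lam * b' + a') / (1 + lam) := by
      apply gauge_le (by positivity)
      have e1 : lam • (b' • A y - A x) - (A x - a' • A y)
          = (lam * b' + a') • A y - (1 + lam) • A x := by module
      have h1 : (lam * b' + a') • A y - (1 + lam) • A x ∈ closure C := e1 ▸ hlammem
      have h2 := clC_smul hcone h1 (show 0 < (1+lam)⁻¹ by positivity)
      have e2 : (1+lam)⁻¹ • ((lam * b' + a') • A y - (1 + lam) • A x)
          = ((lam * b' + a') / (1 + lam)) • A y - A x := by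
        rw [smul_sub, smul_smul, smul_smul, inv_mul_cancel₀ (by positivity : (1+lam) ≠ 0),
          one_smul, ← div_eq_inv_mul]
      rwa [e2] at h2
    have hM2 : coneGauge C (A y) (A x) ≤ (1 + mu) / (b' + mu * a') := by
      apply gauge_le (by positivity)
      have e1 : mu • (A x - a' • A y) - (b' • A y - A x)
          = (1 + mu) • A x - (b' + mu * a') • A y := by module
      have h1 : (1 + mu) • A x - (b' + mu * a') • A y ∈ closure C := e1 ▸ hmumem
      have h2 := clC_smul hcone h1 (show 0 < (b' + mu*a')⁻¹ by positivity)
      have e2 : (b' + mu*a')⁻¹ • ((1 + mu) • A x - (b' + mu * a') • A y)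
          = ((1 + mu) / (b' + mu * a')) • A x - A y := by
        rw [smul_sub, smul_smul, smul_smul, inv_mul_cancel₀ (by positivity : (b'+mu*a') ≠ 0),
          one_smul, ← div_eq_inv_mul]
      rwa [e2] at h2
    obtain ⟨hM1pos, -⟩ := gauge_spec hopen h0 hcone hline hAx hAy
    obtain ⟨hM2pos, -⟩ := gauge_spec hopen h0 hcone hline hAy hAx
    set a := Real.sqrt a' with hadef
    set b := Real.sqrt b' with hbdef
    have ha : 0 < a := Real.sqrt_pos.2 ha'
    have hab : a ≤ b := Real.sqrt_le_sqrt ha'b'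
    have ha2 : a^2 = a' := Real.sq_sqrt ha'.le
    have hb2 : b^2 = b' := Real.sq_sqrt (by positivity)
    have hki := key_ineq hk1 ha hab hlam hmu (by rw [hk2]; exact hlmexp)
    rw [ha2, hb2] at hki
    have hDist : hilbertDist C (A x) (A y)
        ≤ Real.log ((a' + lam*b') * (1+mu) / ((1+lam)*(b'+mu*a'))) := by
      rw [hilbertDist]
      apply Real.log_le_log (by positivity)
      calc coneGauge C (A x) (A y) * coneGauge C (A y) (A x)
          ≤ ((lam*b'+a')/(1+lam)) * ((1+mu)/(b'+mu*a')) :=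
            mul_le_mul hM1 hM2 hM2pos.le (by positivity)
        _ = (a' + lam*b') * (1+mu) / ((1+lam)*(b'+mu*a')) := by
            rw [div_mul_div_comm, add_comm (lam*b') a']
    have hlog : Real.log (b'/a') = Real.log (β/α) + 2 * Real.log (1+ε) := by
      have e : b'/a' = (β/α) * (1+ε)^2 := by
        rw [hb'def, ha'def]
        field_simp
      rw [e, Real.log_mul (by positivity) (by positivity), Real.log_pow]
      push_cast; ring
    calc hilbertDist C (A x) (A y) ≤ (k-1)/(k+1) * Real.log (b'/a') := le_trans hDist hki
      _ = (k-1)/(k+1) * Real.log (β/α) + (k-1)/(k+1) * (2*Real.log (1+ε)) := by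
          rw [hlog]; ring
  -- conclude
  rw [hdxy]
  have hδ0 : 0 ≤ (k-1)/(k+1) := div_nonneg (by linarith) (by linarith)
  by_contra hcon
  push_neg at hcon
  rcases eq_or_lt_of_le hδ0 with hδz | hδpos
  · have h := key 1 one_pos
    rw [← hδz, zero_mul, zero_mul, add_zero] at h
    rw [← hδz, zero_mul] at hcon
    linarith
  · set δ := (k-1)/(k+1) with hδdef
    set c := hilbertDist C (A x) (A y) - δ * Real.log (β/α) with hcdef
    have hcpos : 0 < c := by rw [hcdef]; linarith
    set ε := Real.exp (c/(4*δ)) - 1 with hεdef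
    have hε : 0 < ε := by
      rw [hεdef, sub_pos]
      exact Real.one_lt_exp_iff.2 (by positivity)
    have h := key ε hε
    have hlog1 : Real.log (1+ε) = c/(4*δ) := by
      rw [hεdef, show 1 + (Real.exp (c/(4*δ)) - 1) = Real.exp (c/(4*δ)) by ring,
        Real.log_exp]
    rw [hlog1] at h
    have : δ * (2 * (c/(4*δ))) = c/2 := by
      field_simp
      ring
    rw [this] at h
    rw [hcdef] at hcpos
    linarith
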